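/- Let ℒ = { M(f) : f ∈ ℤ[u], f ≠ 0 } be the set of Mahler measures of nonzero one-variable integer polynomials, and define the derived sets inductively by ℒ^{(0)} = ℒ and ℒ^{(k)} = the set of limit points of ℒ^{(k−1)} (points every punctured neighborhood of which meets ℒ^{(k−1)}). If 1 is a limit point of ℒ, then ℒ^{(k)} = [1, ∞) for every k ≥ 1. -/

import Mathlib

open MeasureTheory

open Classical in
/-- The Mahler measure of a one-variable integer polynomial:
`M(f) = exp(∫₀¹ log |f(e^{2πit})| dt)`, with the convention `M(0) = 0`. -/
noncomputable def mahlerPoly (f : Polynomial ℤ) : ℝ :=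
  if f = 0 then 0 else
    Real.exp (∫ t in Set.Icc (0:ℝ) 1,
      Real.log (‖Polynomial.eval
        (Complex.exp (2 * (Real.pi : ℂ) * Complex.I * (t : ℂ)))
        (f.map (Int.castRingHom ℂ))‖))

/-- `ℒ`, the set of Mahler measures of nonzero one-variable integer polynomials. -/
def mahlerSet : Set ℝ := {x | ∃ f : Polynomial ℤ, f ≠ 0 ∧ mahlerPoly f = x}

open Complex Metric intervalIntegral

noncomputable def Complex.abs : AbsoluteValue ℂ ℝ :=
  IsAbsoluteValue.toAbsoluteValue (norm : ℂ → ℝ)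

theorem Complex.abs_apply (z : ℂ) : Complex.abs z = ‖z‖ := rfl

theorem Complex.norm_eq_abs (z : ℂ) : ‖z‖ = Complex.abs z := rfl

theorem Complex.abs_exp (z : ℂ) : Complex.abs (Complex.exp z) = Real.exp z.re :=
  Complex.norm_exp z

theorem Complex.continuous_abs : Continuous Complex.abs := continuous_norm

@[simp] theorem Complex.abs_conj (z : ℂ) : Complex.abs ((starRingEnd ℂ) z) = Complex.abs z :=
  Complex.norm_conj z

@[simp] theorem Complex.abs_ofReal (r : ℝ) : Complex.abs (r : ℂ) = |r| := by
  simp [Complex.abs_apply]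

theorem Complex.sq_abs (z : ℂ) : Complex.abs z ^ 2 = Complex.normSq z := Complex.sq_norm z

theorem Complex.re_le_abs (z : ℂ) : z.re ≤ Complex.abs z := Complex.re_le_norm z

noncomputable def eC (t : ℝ) : ℂ := Complex.exp (2 * (Real.pi : ℂ) * Complex.I * (t : ℂ))

lemma abs_eC (t : ℝ) : Complex.abs (eC t) = 1 := by
  rw [eC, Complex.abs_exp]
  have : (2 * (Real.pi : ℂ) * Complex.I * (t : ℂ)).re = 0 := by
    simp [Complex.mul_re, Complex.mul_im]
  rw [this, Real.exp_zero]

lemma eC_eq_circleMap (t : ℝ) : eC t = circleMap 0 1 (2 * Real.pi * t) := by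
  rw [eC, circleMap]
  push_cast
  ring_nf

-- Step 1: Cauchy
lemma J1 {s : ℂ} (hs : Complex.abs s < 1) :
    ∫ t in Set.Icc (0:ℝ) 1, Real.log (Complex.abs (1 - s * eC t)) = 0 := by
  set F : ℂ → ℂ := fun z => Complex.log (1 - s * z) with hF
  have hdiff : ∀ z ∈ closedBall (0:ℂ) 1, DifferentiableAt ℂ F z := by
    intro z hz
    have hz1 : Complex.abs z ≤ 1 := by simpa [Complex.dist_eq, Complex.norm_eq_abs] using mem_closedBall.1 hz
    have hre : 0 < (1 - s * z).re := by
      have h1 : (s*z).re ≤ Complex.abs (s*z) := Complex.re_le_abs _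
      have h2 : Complex.abs (s*z) < 1 := by
        rw [map_mul]
        calc Complex.abs s * Complex.abs z ≤ Complex.abs s * 1 :=
          mul_le_mul_of_nonneg_left hz1 (Complex.abs.nonneg s)
        _ < 1 := by simpa using hs
      simp only [Complex.sub_re, Complex.one_re]
      linarith
    have hslit : (1 - s * z) ∈ Complex.slitPlane := Or.inl hre
    exact (Complex.differentiableAt_log hslit).comp z
      ((differentiableAt_const _).sub ((differentiableAt_id).const_mul s))
  have hw : (0:ℂ) ∈ ball (0:ℂ) 1 := by simp
  have hc : ContinuousOn F (closedBall (0:ℂ) 1) :=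
    fun z hz => ((hdiff z hz).continuousAt).continuousWithinAt
  have hcauchy := circleIntegral_sub_inv_smul_of_differentiable_on_off_countable
    (Set.countable_empty) hw hc (fun x hx => hdiff x (ball_subset_closedBall hx.1))
  have hF0 : F 0 = 0 := by simp [hF]
  rw [hF0, smul_zero] at hcauchy
  -- unfold circle integral
  have key : ∫ θ in (0:ℝ)..(2*Real.pi), F (circleMap 0 1 θ) = 0 := by
    have : (∮ z in C((0:ℂ), 1), (z - 0)⁻¹ • F z)
        = ∫ θ in (0:ℝ)..(2*Real.pi), Complex.I * F (circleMap 0 1 θ) := by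
      rw [circleIntegral]
      apply intervalIntegral.integral_congr
      intro θ _
      have hne : circleMap 0 1 θ ≠ 0 := circleMap_ne_center one_ne_zero
      simp only [deriv_circleMap, sub_zero, smul_eq_mul]
      field_simp
    rw [this, intervalIntegral.integral_const_mul] at hcauchy
    have := mul_eq_zero.1 hcauchy
    rcases this with h | h
    · exact absurd h Complex.I_ne_zero
    · exact h
  -- integrability
  have hcont : Continuous fun θ : ℝ => F (circleMap 0 1 θ) := by
    rw [continuous_iff_continuousAt]
    intro θ
    exact ((hdiff _ (circleMap_mem_closedBall 0 zero_le_one θ)).continuousAt).comp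
      (continuous_circleMap 0 1).continuousAt
  have hre : ∫ θ in (0:ℝ)..(2*Real.pi), (F (circleMap 0 1 θ)).re = 0 := by
    have hii : IntervalIntegrable (fun θ : ℝ => F (circleMap 0 1 θ)) volume 0 (2*Real.pi) :=
      hcont.intervalIntegrable 0 (2*Real.pi)
    have := Complex.reCLM.intervalIntegral_comp_comm hii
    rw [key] at this
    simpa using this
  -- rewrite re as log abs
  have hre2 : ∫ θ in (0:ℝ)..(2*Real.pi),
      Real.log (Complex.abs (1 - s * circleMap 0 1 θ)) = 0 := by
    have hcg : ∫ θ in (0:ℝ)..(2*Real.pi),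
        Real.log (Complex.abs (1 - s * circleMap 0 1 θ))
        = ∫ θ in (0:ℝ)..(2*Real.pi), (F (circleMap 0 1 θ)).re :=
      intervalIntegral.integral_congr (fun θ _ => (Complex.log_re _).symm)
    rw [hcg, hre]
  -- substitution θ = 2π t
  have hsub : ∫ t in (0:ℝ)..1,
      Real.log (Complex.abs (1 - s * circleMap 0 1 (2*Real.pi*t)))
      = (2*Real.pi)⁻¹ • ∫ θ in (2*Real.pi*0)..(2*Real.pi*1),
          Real.log (Complex.abs (1 - s * circleMap 0 1 θ)) := by
    exact intervalIntegral.integral_comp_mul_left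
      (fun θ => Real.log (Complex.abs (1 - s * circleMap 0 1 θ)))
      (by positivity : (2*Real.pi) ≠ 0)
  rw [mul_zero, mul_one, hre2, smul_zero] at hsub
  have : ∫ t in Set.Icc (0:ℝ) 1, Real.log (Complex.abs (1 - s * eC t))
      = ∫ t in (0:ℝ)..1, Real.log (Complex.abs (1 - s * eC t)) := by
    rw [intervalIntegral.integral_of_le zero_le_one,
      MeasureTheory.integral_Icc_eq_integral_Ioc]
  rw [this]
  calc ∫ t in (0:ℝ)..1, Real.log (Complex.abs (1 - s * eC t))
      = ∫ t in (0:ℝ)..1,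
        Real.log (Complex.abs (1 - s * circleMap 0 1 (2*Real.pi*t))) :=
        intervalIntegral.integral_congr (fun t _ => by rw [eC_eq_circleMap])
    _ = 0 := hsub

lemma continuous_eC : Continuous eC :=
  Complex.continuous_exp.comp (by continuity)

lemma aesm_log_abs {ψ : ℝ → ℂ} (hψ : Continuous ψ) (μ : Measure ℝ) :
    AEStronglyMeasurable (fun t => Real.log (Complex.abs (ψ t))) μ :=
  (Real.measurable_log.comp (Complex.continuous_abs.comp hψ).measurable).aestronglyMeasurable

lemma countable_eC_eq (r : ℂ) : {t : ℝ | eC t = r}.Countable := by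
  by_cases hne : {t : ℝ | eC t = r}.Nonempty
  · obtain ⟨t₀, ht₀⟩ := hne
    have hsub : {t : ℝ | eC t = r} ⊆ Set.range (fun n : ℤ => t₀ + n) := by
      intro t ht
      have : eC t = eC t₀ := by rw [ht₀]; exact ht
      rw [eC, eC, Complex.exp_eq_exp_iff_exists_int] at this
      obtain ⟨n, hn⟩ := this
      refine ⟨n, ?_⟩
      have h2 : (2 * (Real.pi:ℂ) * Complex.I) * ((t₀:ℂ) + (n:ℂ) - (t:ℂ)) = 0 := by
        rw [mul_sub, mul_add]
        rw [hn]; ring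
      have hne2 : (2 * (Real.pi:ℂ) * Complex.I) ≠ 0 := by
        simp [Real.pi_ne_zero, Complex.I_ne_zero]
      have h3 : (t₀:ℂ) + (n:ℂ) - (t:ℂ) = 0 := by
        rcases mul_eq_zero.1 h2 with h | h
        · exact absurd h hne2
        · exact h
      have h4 : ((t₀ + (n:ℝ) : ℝ) : ℂ) = ((t : ℝ) : ℂ) := by
        push_cast
        rw [sub_eq_zero] at h3
        exact_mod_cast h3
      exact_mod_cast Complex.ofReal_inj.1 h4
    exact Set.Countable.mono hsub (Set.countable_range _)
  · rw [Set.not_nonempty_iff_eq_empty] at hne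
    rw [hne]; exact Set.countable_empty

lemma ae_eC_ne (r : ℂ) (μ : Measure ℝ) [NullSingletonClass μ] : ∀ᵐ t ∂μ, eC t ≠ r := by
  have : μ {t : ℝ | eC t = r} = 0 := (countable_eC_eq r).measure_zero μ
  rw [MeasureTheory.ae_iff]
  simpa using this

-- |r| < 1 case
lemma J2 {r : ℂ} (hr : Complex.abs r < 1) :
    ∫ t in Set.Icc (0:ℝ) 1, Real.log (Complex.abs (eC t - r)) = 0 := by
  have key : ∀ t : ℝ, Complex.abs (eC t - r)
      = Complex.abs (1 - (starRingEnd ℂ) r * eC t) := by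
    intro t
    have h1 : Complex.abs (eC t - r) = Complex.abs ((starRingEnd ℂ) (eC t - r)) :=
      (Complex.abs_conj _).symm
    have hne : eC t ≠ 0 := by
      intro h; have := abs_eC t; rw [h] at this; simp at this
    have h2 : (starRingEnd ℂ) (eC t) = (eC t)⁻¹ := by
      rw [Complex.inv_def]
      have : Complex.normSq (eC t) = 1 := by
        rw [← Complex.sq_abs, abs_eC]; norm_num
      rw [this]; simp
    have h3 : (starRingEnd ℂ) (eC t - r) = (eC t)⁻¹ * (1 - (starRingEnd ℂ) r * eC t) := by
      rw [map_sub, h2]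
      field_simp
    rw [h1, h3, map_mul, map_inv₀, abs_eC]
    norm_num
  have : ∫ t in Set.Icc (0:ℝ) 1, Real.log (Complex.abs (eC t - r))
      = ∫ t in Set.Icc (0:ℝ) 1,
          Real.log (Complex.abs (1 - (starRingEnd ℂ) r * eC t)) := by
    apply MeasureTheory.integral_congr_ae
    filter_upwards with t
    rw [key t]
  rw [this]
  exact J1 (by rwa [Complex.abs_conj])

-- |r| > 1 case
lemma J3 {r : ℂ} (hr : 1 < Complex.abs r) :
    ∫ t in Set.Icc (0:ℝ) 1, Real.log (Complex.abs (eC t - r))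
      = Real.log (Complex.abs r) := by
  have hr0 : r ≠ 0 := by
    intro h; rw [h] at hr; simp at hr; linarith
  have hinv : Complex.abs r⁻¹ < 1 := by
    rw [map_inv₀]
    rw [inv_lt_one_iff₀]
    right; exact hr
  have key : ∀ t : ℝ, Complex.abs (eC t - r)
      = Complex.abs r * Complex.abs (1 - r⁻¹ * eC t) := by
    intro t
    rw [← map_mul]
    have h5 : r * (1 - r⁻¹ * eC t) = r - eC t := by
      field_simp
    rw [h5]
    exact Complex.abs.map_sub _ _
  have hne : ∀ t : ℝ, (1 - r⁻¹ * eC t) ≠ 0 := by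
    intro t h
    have : Complex.abs (r⁻¹ * eC t) = 1 := by
      have : r⁻¹ * eC t = 1 := by linear_combination -h
      rw [this]; simp
    rw [map_mul, abs_eC, mul_one] at this
    rw [this] at hinv; exact lt_irrefl _ hinv
  have hlog : ∀ t : ℝ, Real.log (Complex.abs (eC t - r))
      = Real.log (Complex.abs r) + Real.log (Complex.abs (1 - r⁻¹ * eC t)) := by
    intro t
    rw [key t, Real.log_mul (by positivity) (Complex.abs.ne_zero (hne t))]
  have hcont : Continuous fun t => Real.log (Complex.abs (1 - r⁻¹ * eC t)) := by
    rw [continuous_iff_continuousAt]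
    intro t
    have hc1 : ContinuousAt (fun t : ℝ => Complex.abs (1 - r⁻¹ * eC t)) t :=
      (Complex.continuous_abs.comp
        (continuous_const.sub (continuous_const.mul continuous_eC))).continuousAt
    exact hc1.log (Complex.abs.ne_zero (hne t))
  have hint2 : IntegrableOn (fun t => Real.log (Complex.abs (1 - r⁻¹ * eC t)))
      (Set.Icc (0:ℝ) 1) := hcont.integrableOn_Icc
  have split : ∫ t in Set.Icc (0:ℝ) 1, Real.log (Complex.abs (eC t - r))
      = ∫ t in Set.Icc (0:ℝ) 1, (Real.log (Complex.abs r)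
        + Real.log (Complex.abs (1 - r⁻¹ * eC t))) := by
    apply MeasureTheory.integral_congr_ae
    filter_upwards with t using hlog t
  rw [split, MeasureTheory.integral_add (μ := volume.restrict (Set.Icc (0:ℝ) 1)) (show IntegrableOn (fun _ : ℝ => Real.log (Complex.abs r))
      (Set.Icc (0:ℝ) 1) volume from integrableOn_const (by
      rw [Real.volume_Icc]; norm_num)) hint2]
  have h1 : ∫ _t in Set.Icc (0:ℝ) 1, Real.log (Complex.abs r)
      = Real.log (Complex.abs r) := by
    rw [MeasureTheory.setIntegral_const, Real.volume_real_Icc]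
    norm_num
  have h2 : ∫ t in Set.Icc (0:ℝ) 1, Real.log (Complex.abs (1 - r⁻¹ * eC t)) = 0 := by
    have := J1 hinv
    simpa using this
  rw [h1, h2, add_zero]

-- |r| = 1 case, assuming integrability
lemma J4 {r : ℂ} (hr : Complex.abs r = 1)
    (hint : IntegrableOn (fun t => Real.log (Complex.abs (eC t - r)))
      (Set.Icc (0:ℝ) 1) volume) :
    ∫ t in Set.Icc (0:ℝ) 1, Real.log (Complex.abs (eC t - r)) = 0 := by
  set μ := volume.restrict (Set.Icc (0:ℝ) 1) with hμ
  set g : ℝ → ℝ := fun t => Real.log (Complex.abs (eC t - r)) with hg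
  set ρ : ℕ → ℝ := fun n => 1 - 1/(n+2) with hρ
  have hρ_half : ∀ n, (1:ℝ)/2 ≤ ρ n := by
    intro n
    have h2 : (1:ℝ)/(n+2) ≤ 1/2 := by
      apply div_le_div_of_nonneg_left <;> [norm_num; norm_num; exact_mod_cast by linarith [Nat.zero_le n]]
    simp only [hρ]; linarith
  have hρ_lt : ∀ n, ρ n < 1 := by
    intro n
    have : (0:ℝ) < 1/(n+2) := by positivity
    simp only [hρ]; linarith
  have hρ_pos : ∀ n, (0:ℝ) ≤ ρ n := fun n => le_trans (by norm_num) (hρ_half n)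
  have hρ_tendsto : Filter.Tendsto ρ Filter.atTop (nhds 1) := by
    have h0 : Filter.Tendsto (fun n : ℕ => 1/((n:ℝ)+2)) Filter.atTop (nhds 0) := by
      apply Filter.Tendsto.div_atTop tendsto_const_nhds
      apply Filter.tendsto_atTop_add_const_right
      exact tendsto_natCast_atTop_atTop
    have := Filter.Tendsto.const_sub (1:ℝ) h0
    simpa [hρ, one_div] using this
  set F : ℕ → ℝ → ℝ := fun n t => Real.log (Complex.abs (eC t - (ρ n : ℂ) * r)) with hFdef
  have habs_rn : ∀ n, Complex.abs ((ρ n : ℂ) * r) = ρ n := by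
    intro n
    rw [map_mul, hr, mul_one, Complex.abs_ofReal, _root_.abs_of_nonneg (hρ_pos n)]
  have hInt_F : ∀ n, ∫ t, F n t ∂μ = 0 := by
    intro n
    exact J2 (by rw [habs_rn]; exact hρ_lt n)
  have hF_meas : ∀ n, AEStronglyMeasurable (F n) μ :=
    fun n => aesm_log_abs (continuous_eC.sub continuous_const) μ
  have hbound_int : Integrable (fun t => |g t| + Real.log 2) μ := by
    apply Integrable.add hint.abs
    exact (integrableOn_const (by rw [Real.volume_Icc]; norm_num))
  -- key pointwise bounds at points where eC t ≠ r
  have hae : ∀ᵐ t ∂μ, eC t ≠ r := MeasureTheory.ae_restrict_of_ae (ae_eC_ne r volume)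
  have h_bound : ∀ n, ∀ᵐ t ∂μ, ‖F n t‖ ≤ |g t| + Real.log 2 := by
    intro n
    filter_upwards [hae] with t ht
    set A := Complex.abs (eC t - (ρ n : ℂ) * r) with hA
    have hgpos : 0 < Complex.abs (eC t - r) := Complex.abs.pos (sub_ne_zero.2 ht)
    have hA_low : Complex.abs (eC t - r) ≤ 2 * A := by
      have h1 : Complex.abs (eC t - r) ≤ A + Complex.abs ((ρ n : ℂ) * r - r) := by
        calc Complex.abs (eC t - r)
            = Complex.abs ((eC t - (ρ n : ℂ) * r) + ((ρ n : ℂ) * r - r)) := by ring_nf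
          _ ≤ A + Complex.abs ((ρ n : ℂ) * r - r) := Complex.abs.add_le _ _
      have h2 : Complex.abs ((ρ n : ℂ) * r - r) = 1 - ρ n := by
        have : (ρ n : ℂ) * r - r = ((ρ n : ℝ) - 1 : ℝ) * r := by push_cast; ring
        rw [this, map_mul, hr, mul_one, Complex.abs_ofReal,
          _root_.abs_of_nonpos (by linarith [hρ_lt n])]
        ring
      have h3 : 1 - ρ n ≤ A := by
        calc 1 - ρ n = Complex.abs (eC t) - Complex.abs ((ρ n : ℂ) * r) := by
              rw [abs_eC, habs_rn]
          _ ≤ A := by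
              have := norm_sub_norm_le (eC t) ((ρ n : ℂ) * r)
              simpa [Complex.norm_eq_abs] using this
      linarith
    have hA_pos : 0 < A := by linarith
    have hA_hi : A ≤ 2 := by
      calc A ≤ Complex.abs (eC t) + Complex.abs ((ρ n : ℂ) * r) := Complex.abs.sub_le_add _ _
        _ = 1 + ρ n := by rw [abs_eC, habs_rn]
        _ ≤ 2 := by linarith [hρ_lt n]
    have hup : F n t ≤ Real.log 2 := by
      have := Real.log_le_log hA_pos hA_hi
      simpa [hFdef] using this
    have hlo : g t - Real.log 2 ≤ F n t := by
      have h4 : Real.log (Complex.abs (eC t - r)) ≤ Real.log (2 * A) :=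
        Real.log_le_log hgpos hA_low
      rw [Real.log_mul two_ne_zero (ne_of_gt hA_pos)] at h4
      simp only [hg, hFdef]
      linarith
    rw [Real.norm_eq_abs, abs_le]
    constructor
    · have : -|g t| ≤ g t := neg_abs_le _
      linarith
    · have : g t ≤ |g t| := le_abs_self _
      have h2pos : (0:ℝ) ≤ Real.log 2 := Real.log_nonneg one_le_two
      linarith [abs_nonneg (g t)]
  have h_lim : ∀ᵐ t ∂μ, Filter.Tendsto (fun n => F n t) Filter.atTop (nhds (g t)) := by
    filter_upwards [hae] with t ht
    have t2 : Filter.Tendsto (fun n => eC t - (ρ n : ℂ) * r) Filter.atTop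
        (nhds (eC t - r)) := by
      have c1 : Filter.Tendsto (fun n => ((ρ n : ℝ) : ℂ)) Filter.atTop (nhds (1:ℂ)) := by
        have := (Complex.continuous_ofReal.tendsto 1).comp hρ_tendsto
        exact this
      have c2 := (c1.mul_const r)
      rw [one_mul] at c2
      exact tendsto_const_nhds.sub c2
    have t3 : Filter.Tendsto (fun n => Complex.abs (eC t - (ρ n : ℂ) * r)) Filter.atTop
        (nhds (Complex.abs (eC t - r))) :=
      (Complex.continuous_abs.tendsto _).comp t2
    exact ((Real.continuousAt_log (Complex.abs.ne_zero (sub_ne_zero.2 ht))).tendsto).comp t3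
  have hmain := MeasureTheory.tendsto_integral_of_dominated_convergence
    (fun t => |g t| + Real.log 2) hF_meas hbound_int h_bound h_lim
  simp only [hInt_F] at hmain
  exact (tendsto_nhds_unique tendsto_const_nhds hmain).symm

/-- integral of a single root factor -/
lemma integral_g (r : ℂ)
    (hint : IntegrableOn (fun t => Real.log (Complex.abs (eC t - r)))
      (Set.Icc (0:ℝ) 1) volume) :
    ∫ t in Set.Icc (0:ℝ) 1, Real.log (Complex.abs (eC t - r))
      = Real.log (max (Complex.abs r) 1) := by
  rcases lt_trichotomy (Complex.abs r) 1 with h | h | h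
  · rw [max_eq_right h.le, Real.log_one]
    exact J2 h
  · rw [h, max_self, Real.log_one]
    exact J4 h hint
  · rw [max_eq_left h.le]
    exact J3 h

lemma log_le_log' {x y : ℝ} (hx : 0 ≤ x) (hxy : x ≤ y) (hy : 1 ≤ y) :
    Real.log x ≤ Real.log y := by
  rcases eq_or_lt_of_le hx with h | h
  · rw [← h, Real.log_zero]; exact Real.log_nonneg hy
  · exact Real.log_le_log h hxy

lemma ae_eval_ne {p : Polynomial ℂ} (hp : p ≠ 0) :
    ∀ᵐ t : ℝ ∂volume, p.eval (eC t) ≠ 0 := by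
  have hc : {t : ℝ | p.eval (eC t) = 0}.Countable := by
    have hsub : {t : ℝ | p.eval (eC t) = 0}
        ⊆ ⋃ z ∈ (p.roots.toFinset : Set ℂ), {t : ℝ | eC t = z} := by
      intro t ht
      simp only [Set.mem_setOf_eq] at ht
      have hz : eC t ∈ p.roots := by
        rw [Polynomial.mem_roots hp]; exact ht
      exact Set.mem_biUnion (by simpa using Multiset.mem_toFinset.2 hz) rfl
    exact Set.Countable.mono hsub
      (Set.Countable.biUnion p.roots.toFinset.countable_toSet
        (fun z _ => countable_eC_eq z))
  rw [MeasureTheory.ae_iff]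
  have heq : {t : ℝ | ¬ p.eval (eC t) ≠ 0} = {t : ℝ | p.eval (eC t) = 0} := by
    ext t; simp
  rw [heq]
  exact hc.measure_zero volume

/-- Jensen-type inequality: the circle average of `log |p|` is at least
`log |leadingCoeff p|`. -/
lemma log_lead_le_integral : ∀ (n : ℕ) (p : Polynomial ℂ), p.natDegree ≤ n → p ≠ 0 →
    IntegrableOn (fun t => Real.log (Complex.abs (p.eval (eC t)))) (Set.Icc (0:ℝ) 1) volume →
    Real.log (Complex.abs p.leadingCoeff)
      ≤ ∫ t in Set.Icc (0:ℝ) 1, Real.log (Complex.abs (p.eval (eC t))) := by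
  intro n
  induction n with
  | zero =>
    intro p hdeg hp _
    have hpc : p = Polynomial.C (p.coeff 0) := Polynomial.eq_C_of_natDegree_le_zero hdeg
    have hconst : ∀ t : ℝ, Real.log (Complex.abs (p.eval (eC t)))
        = Real.log (Complex.abs p.leadingCoeff) := by
      intro t
      conv_lhs => rw [hpc]
      rw [Polynomial.eval_C]
      congr 2
      conv_rhs => rw [hpc]
      rw [Polynomial.leadingCoeff_C]
    rw [MeasureTheory.integral_congr_ae (Filter.Eventually.of_forall hconst),
      MeasureTheory.setIntegral_const, Real.volume_real_Icc]
    norm_num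
  | succ n ih =>
    intro p hdeg hp hint
    by_cases hdn : p.natDegree ≤ n
    · exact ih p hdn hp hint
    have hdpos : 0 < p.degree := Polynomial.natDegree_pos_iff_degree_pos.1 (by omega)
    obtain ⟨r, hr⟩ := Complex.exists_root hdpos
    obtain ⟨q, hq⟩ := Polynomial.dvd_iff_isRoot.2 hr
    have hq0 : q ≠ 0 := by
      intro h; rw [h, mul_zero] at hq; exact hp hq
    have hXC : (Polynomial.X - Polynomial.C r) ≠ (0 : Polynomial ℂ) :=
      Polynomial.X_sub_C_ne_zero r
    have hqdeg : q.natDegree ≤ n := by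
      have hnd := Polynomial.natDegree_mul hXC hq0
      rw [← hq, Polynomial.natDegree_X_sub_C] at hnd
      omega
    have hlead : p.leadingCoeff = q.leadingCoeff := by
      rw [hq, Polynomial.leadingCoeff_mul, Polynomial.leadingCoeff_X_sub_C, one_mul]
    set G : ℝ → ℝ := fun t => Real.log (Complex.abs (eC t - r)) with hGdef
    set HQ : ℝ → ℝ := fun t => Real.log (Complex.abs (q.eval (eC t))) with hHQdef
    set HP : ℝ → ℝ := fun t => Real.log (Complex.abs (p.eval (eC t))) with hHPdef
    -- upper bounds
    obtain ⟨B, hB⟩ := (isCompact_sphere (0:ℂ) 1).exists_bound_of_continuousOn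
      (q.continuous.continuousOn (s := sphere (0:ℂ) 1))
    set B' : ℝ := max B 1 with hB'def
    have hB'1 : (1:ℝ) ≤ B' := le_max_right _ _
    have hHQ_le : ∀ t, HQ t ≤ Real.log B' := by
      intro t
      apply log_le_log' (Complex.abs.nonneg _) _ hB'1
      have hmem : eC t ∈ sphere (0:ℂ) 1 := by
        simp [Complex.dist_eq, Complex.norm_eq_abs, abs_eC]
      calc Complex.abs (q.eval (eC t)) ≤ B := by
            have := hB (eC t) hmem
            simpa [Complex.norm_eq_abs] using this
        _ ≤ B' := le_max_left _ _
    set K : ℝ := 2 + Complex.abs r with hKdef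
    have hK1 : (1:ℝ) ≤ K := by
      have := Complex.abs.nonneg r; simp only [hKdef]; linarith
    have hG_le : ∀ t, G t ≤ Real.log K := by
      intro t
      apply log_le_log' (Complex.abs.nonneg _) _ hK1
      calc Complex.abs (eC t - r) ≤ Complex.abs (eC t) + Complex.abs r :=
            Complex.abs.sub_le_add _ _
        _ ≤ K := by rw [abs_eC]; simp only [hKdef]; linarith
    have hlogB'0 : 0 ≤ Real.log B' := Real.log_nonneg hB'1
    have hlogK0 : 0 ≤ Real.log K := Real.log_nonneg hK1
    -- a.e. splitting
    set μ := volume.restrict (Set.Icc (0:ℝ) 1) with hμdef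
    have haeμ : ∀ᵐ t ∂μ, p.eval (eC t) ≠ 0 :=
      MeasureTheory.ae_restrict_of_ae (ae_eval_ne hp)
    have hsplit : ∀ᵐ t ∂μ, HP t = G t + HQ t := by
      filter_upwards [haeμ] with t ht
      have heval : p.eval (eC t) = (eC t - r) * q.eval (eC t) := by
        rw [hq]; simp [Polynomial.eval_mul]
      have h1 : (eC t - r) ≠ 0 := by
        intro h; rw [heval, h, zero_mul] at ht; exact ht rfl
      have h2 : q.eval (eC t) ≠ 0 := by
        intro h; rw [heval, h, mul_zero] at ht; exact ht rfl
      simp only [hHPdef, hGdef, hHQdef]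
      rw [heval, map_mul, Real.log_mul (Complex.abs.ne_zero h1) (Complex.abs.ne_zero h2)]
    -- integrability of the pieces
    have hmeasG : AEStronglyMeasurable G μ :=
      aesm_log_abs (continuous_eC.sub continuous_const) μ
    have hmeasHQ : AEStronglyMeasurable HQ μ :=
      aesm_log_abs (q.continuous.comp continuous_eC) μ
    have hboundint : Integrable (fun t => |HP t| + (Real.log B' + Real.log K)) μ := by
      apply Integrable.add hint.abs
      exact integrableOn_const (by rw [Real.volume_Icc]; norm_num)
    have hintG : Integrable G μ := by
      apply Integrable.mono' hboundint hmeasG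
      filter_upwards [hsplit] with t ht
      rw [Real.norm_eq_abs, abs_le]
      constructor
      · have : G t = HP t - HQ t := by linarith [ht]
        have h2 := hHQ_le t
        have : HP t - Real.log B' ≤ G t := by linarith
        have h3 : -|HP t| ≤ HP t := neg_abs_le _
        linarith
      · have := hG_le t
        linarith [abs_nonneg (HP t)]
    have hintHQ : Integrable HQ μ := by
      apply Integrable.mono' hboundint hmeasHQ
      filter_upwards [hsplit] with t ht
      rw [Real.norm_eq_abs, abs_le]
      constructor
      · have h2 := hG_le t
        have : HP t - Real.log K ≤ HQ t := by linarith
        have h3 : -|HP t| ≤ HP t := neg_abs_le _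
        linarith
      · have := hHQ_le t
        linarith [abs_nonneg (HP t)]
    -- split the integral
    have hIsplit : ∫ t, HP t ∂μ = (∫ t, G t ∂μ) + ∫ t, HQ t ∂μ := by
      rw [← MeasureTheory.integral_add hintG hintHQ]
      exact MeasureTheory.integral_congr_ae hsplit
    have hGval : ∫ t, G t ∂μ = Real.log (max (Complex.abs r) 1) := integral_g r hintG
    have hGnn : 0 ≤ ∫ t, G t ∂μ := by
      rw [hGval]; exact Real.log_nonneg (le_max_right _ _)
    have hQint : Real.log (Complex.abs q.leadingCoeff) ≤ ∫ t, HQ t ∂μ :=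
      ih q hqdeg hq0 hintHQ
    calc Real.log (Complex.abs p.leadingCoeff)
        = Real.log (Complex.abs q.leadingCoeff) := by rw [hlead]
      _ ≤ ∫ t, HQ t ∂μ := hQint
      _ ≤ (∫ t, G t ∂μ) + ∫ t, HQ t ∂μ := by linarith
      _ = ∫ t, HP t ∂μ := hIsplit.symm

lemma integral_nonneg_of_ne {f : Polynomial ℤ} (hf : f ≠ 0) :
    0 ≤ ∫ t in Set.Icc (0:ℝ) 1,
      Real.log (Complex.abs ((f.map (Int.castRingHom ℂ)).eval (eC t))) := by
  set p := f.map (Int.castRingHom ℂ) with hpdef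
  have hp : p ≠ 0 := (Polynomial.map_ne_zero_iff
    (Int.cast_injective (α := ℂ))).2 hf
  by_cases hint : IntegrableOn (fun t => Real.log (Complex.abs (p.eval (eC t))))
      (Set.Icc (0:ℝ) 1) volume
  · have hkey := log_lead_le_integral p.natDegree p le_rfl hp hint
    have hlc : (1:ℝ) ≤ Complex.abs p.leadingCoeff := by
      have hmap : p.leadingCoeff = ((f.leadingCoeff : ℤ) : ℂ) := by
        rw [hpdef]
        exact Polynomial.leadingCoeff_map_of_injective (Int.cast_injective (α := ℂ)) f
      rw [hmap]
      have h1 : f.leadingCoeff ≠ 0 := Polynomial.leadingCoeff_ne_zero.2 hf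
      have h2 : (1:ℤ) ≤ |f.leadingCoeff| := Int.one_le_abs h1
      calc (1:ℝ) ≤ |(f.leadingCoeff : ℝ)| := by
            rw [← Int.cast_abs]; exact_mod_cast h2
        _ = Complex.abs ((f.leadingCoeff : ℤ) : ℂ) := by
            rw [← Complex.abs_ofReal]; norm_cast
    calc (0:ℝ) ≤ Real.log (Complex.abs p.leadingCoeff) := Real.log_nonneg hlc
      _ ≤ _ := hkey
  · rw [MeasureTheory.integral_undef hint]

lemma one_le_mahlerPoly {f : Polynomial ℤ} (hf : f ≠ 0) : 1 ≤ mahlerPoly f := by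
  rw [mahlerPoly, if_neg hf]
  exact Real.one_le_exp (integral_nonneg_of_ne hf)

lemma mahlerSet_subset_Ici : mahlerSet ⊆ Set.Ici (1:ℝ) := by
  rintro x ⟨f, hf, rfl⟩
  exact one_le_mahlerPoly hf

lemma mahlerPoly_pow {f : Polynomial ℤ} (hf : f ≠ 0) (n : ℕ) :
    mahlerPoly (f ^ n) = (mahlerPoly f) ^ n := by
  have hfn : f ^ n ≠ 0 := pow_ne_zero n hf
  rw [mahlerPoly, mahlerPoly, if_neg hfn, if_neg hf]
  rw [← Real.exp_nat_mul]
  congr 1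
  rw [← MeasureTheory.integral_const_mul]
  apply MeasureTheory.integral_congr_ae
  filter_upwards with t
  rw [Polynomial.map_pow, Polynomial.eval_pow, norm_pow, Real.log_pow]

lemma pow_mem_mahlerSet {a : ℝ} (ha : a ∈ mahlerSet) (n : ℕ) : a ^ n ∈ mahlerSet := by
  obtain ⟨f, hf, rfl⟩ := ha
  exact ⟨f ^ n, pow_ne_zero n hf, mahlerPoly_pow hf n⟩

lemma derivedSet_Ici_one : derivedSet (Set.Ici (1:ℝ)) = Set.Ici 1 := by
  apply subset_antisymm
  · calc derivedSet (Set.Ici (1:ℝ)) ⊆ closure (Set.Ici 1) := derivedSet_subset_closure _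
      _ = Set.Ici 1 := isClosed_Ici.closure_eq
  · intro x hx
    rw [mem_derivedSet, accPt_iff_nhds]
    intro U hU
    obtain ⟨ε, hε, hball⟩ := Metric.mem_nhds_iff.1 hU
    refine ⟨x + ε/2, ⟨hball ?_, ?_⟩, ?_⟩
    · rw [Metric.mem_ball, Real.dist_eq]
      have harith : x + ε/2 - x = ε/2 := by ring
      rw [harith, _root_.abs_of_nonneg (by linarith)]
      linarith
    · have : (1:ℝ) ≤ x := hx
      simp only [Set.mem_Ici]
      linarith
    · intro hcontra
      have : ε/2 = 0 := by linarith [congrArg (fun y => y - x) hcontra]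
      linarith

lemma derivedSet_mahlerSet (h : (1:ℝ) ∈ derivedSet mahlerSet) :
    derivedSet mahlerSet = Set.Ici (1:ℝ) := by
  apply subset_antisymm
  · calc derivedSet mahlerSet ⊆ closure mahlerSet := derivedSet_subset_closure _
      _ ⊆ Set.Ici 1 := closure_minimal mahlerSet_subset_Ici isClosed_Ici
  · intro x hx
    have hx1 : (1:ℝ) ≤ x := hx
    have hx0 : (0:ℝ) < x := by linarith
    rw [mem_derivedSet, accPt_iff_nhds]
    intro U hU
    obtain ⟨ε, hε, hball⟩ := Metric.mem_nhds_iff.1 hU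
    -- get an element of mahlerSet close to 1 but ≠ 1
    have h' := (accPt_iff_nhds (x := 1) (C := mahlerSet)).1 h
    set δ : ℝ := min (ε / (2 * x)) 1 with hδdef
    have hδpos : 0 < δ := by
      apply lt_min _ one_pos
      positivity
    obtain ⟨a, ⟨haball, haM⟩, hane⟩ := h' (Metric.ball 1 δ) (Metric.ball_mem_nhds 1 hδpos)
    have ha1 : 1 < a := by
      have := mahlerSet_subset_Ici haM
      rcases lt_or_eq_of_le (Set.mem_Ici.1 this) with h1 | h1
      · exact h1
      · exact absurd h1.symm hane
    have haclose : a - 1 < δ := by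
      rw [Metric.mem_ball, Real.dist_eq] at haball
      calc a - 1 ≤ |a - 1| := le_abs_self _
        _ < δ := haball
    -- find the first power of a exceeding x
    obtain ⟨m, hm⟩ := pow_unbounded_of_one_lt x ha1
    have hex : ∃ k : ℕ, x < a ^ k := ⟨m, hm⟩
    set N := Nat.find hex with hNdef
    have hN : x < a ^ N := Nat.find_spec hex
    have hN0 : N ≠ 0 := by
      intro h0
      rw [h0, pow_zero] at hN
      linarith
    have hNpred : a ^ (N - 1) ≤ x := by
      have := Nat.find_min hex (m := N - 1) (by omega)
      linarith [not_lt.1 this]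
    have hupper : a ^ N ≤ a * x := by
      have : a ^ N = a * a ^ (N - 1) := by
        conv_lhs => rw [show N = (N-1) + 1 by omega]
        rw [pow_succ]
        ring
      rw [this]
      have ha0 : (0:ℝ) < a := by linarith
      nlinarith
    refine ⟨a ^ N, ⟨hball ?_, pow_mem_mahlerSet haM N⟩, ?_⟩
    · rw [Metric.mem_ball, Real.dist_eq, _root_.abs_of_pos (by linarith)]
      have hδ1 : δ ≤ ε / (2 * x) := min_le_left _ _
      have : a ^ N - x ≤ a * x - x := by linarith
      have h2 : a * x - x = (a - 1) * x := by ring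
      have h3 : (a - 1) * x < δ * x := by
        apply mul_lt_mul_of_pos_right haclose hx0
      have h4 : δ * x ≤ (ε / (2 * x)) * x := by
        apply mul_le_mul_of_nonneg_right hδ1 (le_of_lt hx0)
      have h5 : (ε / (2 * x)) * x = ε / 2 := by
        field_simp
      linarith
    · intro hcontra
      rw [hcontra] at hN
      exact lt_irrefl _ hN

lemma derivedSet_iterate_Ici : ∀ m : ℕ, derivedSet^[m] (Set.Ici (1:ℝ)) = Set.Ici 1 := by
  intro m
  induction m with
  | zero => rfl
  | succ m ihm =>
    rw [Function.iterate_succ_apply', ihm, derivedSet_Ici_one]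


/-- If `1` is a limit point of `ℒ`, then every iterated derived set
`ℒ^{(k)}`, `k ≥ 1`, is the whole interval `[1, ∞)`.  Here `derivedSet S` is the set of
limit points of `S`: the points every punctured neighborhood of which meets `S`. -/
theorem derivedSet_mahlerSet_eq_Ici (h : (1:ℝ) ∈ derivedSet mahlerSet) :
    ∀ k : ℕ, 1 ≤ k → derivedSet^[k] mahlerSet = Set.Ici (1:ℝ) := by
  intro k hk
  obtain ⟨m, rfl⟩ : ∃ m, k = m + 1 := ⟨k - 1, by omega⟩
  rw [Function.iterate_succ_apply, derivedSet_mahlerSet h, derivedSet_iterate_Ici]
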